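/- The system {(1-x), (1-x)cos(2kπx), sin(2kπx) : k ≥ 1} is complete in L²(0,1): if f ∈ L²(0,1) satisfies ∫₀¹ f(x)(1-x) dx = 0, ∫₀¹ f(x)(1-x)cos(2kπx) dx = 0 and ∫₀¹ f(x) sin(2kπx) dx = 0 for every integer k ≥ 1, then f = 0 almost everywhere on (0,1). -/

import Mathlib

open MeasureTheory Real

set_option maxHeartbeats 1000000

noncomputable section

namespace CompleteSystemAux

open Set Complex

/-- reflection `x ↦ 1 - x` preserves Lebesgue measure restricted to `(0,1)`. -/
lemma refl_mp : MeasurePreserving (fun x : ℝ => 1 - x)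
    (volume.restrict (Set.Ioo (0:ℝ) 1)) (volume.restrict (Set.Ioo (0:ℝ) 1)) := by
  have h : MeasurePreserving (fun x : ℝ => 1 - x) volume volume :=
    Measure.measurePreserving_sub_left volume 1
  have hemb : MeasurableEmbedding (fun x : ℝ => 1 - x) :=
    (Homeomorph.subLeft (1:ℝ)).measurableEmbedding
  have hpre : (fun x : ℝ => 1 - x) ⁻¹' (Set.Ioo (0:ℝ) 1) = Set.Ioo (0:ℝ) 1 := by
    ext x
    simp only [Set.mem_preimage, Set.mem_Ioo]
    constructor <;> rintro ⟨a, b⟩ <;> constructor <;> linarith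
  have := h.restrict_preimage_emb hemb (Set.Ioo (0:ℝ) 1)
  rwa [hpre] at this

lemma refl_emb : MeasurableEmbedding (fun x : ℝ => 1 - x) :=
  (Homeomorph.subLeft (1:ℝ)).measurableEmbedding

lemma integral_reflect (h : ℝ → ℝ) :
    ∫ x in Set.Ioo (0:ℝ) 1, h (1 - x) = ∫ x in Set.Ioo (0:ℝ) 1, h x :=
  refl_mp.integral_comp refl_emb h

lemma cos_reflect (k : ℕ) (x : ℝ) :
    Real.cos (2 * k * π * (1 - x)) = Real.cos (2 * k * π * x) := by
  have h : 2 * (k:ℝ) * π * (1 - x) = (k:ℝ) * (2 * π) - 2 * k * π * x := by ring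
  rw [h, Real.cos_nat_mul_two_pi_sub]

lemma sin_reflect (k : ℕ) (x : ℝ) :
    Real.sin (2 * k * π * (1 - x)) = -Real.sin (2 * k * π * x) := by
  have h : 2 * (k:ℝ) * π * (1 - x) = (k:ℝ) * (2 * π) - 2 * k * π * x := by ring
  rw [h, Real.sin_nat_mul_two_pi_sub]

lemma complete_fourier (g : ℝ → ℝ)
    (hg : MemLp g 2 (volume.restrict (Set.Ioo (0:ℝ) 1)))
    (hcos : ∀ k : ℕ, ∫ x in Set.Ioo (0:ℝ) 1, g x * Real.cos (2 * k * π * x) = 0)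
    (hsin : ∀ k : ℕ, ∫ x in Set.Ioo (0:ℝ) 1, g x * Real.sin (2 * k * π * x) = 0) :
    ∀ᵐ x ∂(volume.restrict (Set.Ioo (0:ℝ) 1)), g x = 0 := by
  haveI : Fact ((0:ℝ) < 1) := ⟨one_pos⟩
  have hres : volume.restrict (Set.Ioo (0:ℝ) 1) = volume.restrict (Set.Ioc (0:ℝ) 1) :=
    Measure.restrict_congr_set Ioo_ae_eq_Ioc
  -- measurable representative
  set g' : ℝ → ℝ := hg.1.mk g with hg'def
  have hg'sm : StronglyMeasurable g' := hg.1.stronglyMeasurable_mk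
  have heq : g =ᵐ[volume.restrict (Set.Ioo (0:ℝ) 1)] g' := hg.1.ae_eq_mk
  have hg'mem : MemLp g' 2 (volume.restrict (Set.Ioo (0:ℝ) 1)) := hg.ae_eq heq
  -- hypotheses for g' on Ioc
  have hcos' : ∀ k : ℕ, ∫ x in Set.Ioc (0:ℝ) 1, g' x * Real.cos (2 * k * π * x) = 0 := by
    intro k
    calc ∫ x in Set.Ioc (0:ℝ) 1, g' x * Real.cos (2 * k * π * x)
        = ∫ x in Set.Ioo (0:ℝ) 1, g' x * Real.cos (2 * k * π * x) := by rw [hres]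
      _ = ∫ x in Set.Ioo (0:ℝ) 1, g x * Real.cos (2 * k * π * x) :=
          integral_congr_ae (heq.mono fun x hx => by dsimp only; rw [hx])
      _ = 0 := hcos k
  have hsin' : ∀ k : ℕ, ∫ x in Set.Ioc (0:ℝ) 1, g' x * Real.sin (2 * k * π * x) = 0 := by
    intro k
    calc ∫ x in Set.Ioc (0:ℝ) 1, g' x * Real.sin (2 * k * π * x)
        = ∫ x in Set.Ioo (0:ℝ) 1, g' x * Real.sin (2 * k * π * x) := by rw [hres]
      _ = ∫ x in Set.Ioo (0:ℝ) 1, g x * Real.sin (2 * k * π * x) :=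
          integral_congr_ae (heq.mono fun x hx => by dsimp only; rw [hx])
      _ = 0 := hsin k
  -- lift to the circle
  set gc : ℝ → ℂ := fun x => (g' x : ℂ) with hgcdef
  set G : AddCircle (1:ℝ) → ℂ := AddCircle.liftIoc 1 0 gc with hGdef
  have hGm : Measurable G := by
    have h1 : Measurable fun x : Set.Ioc (0:ℝ) (0+1) => gc (x:ℝ) :=
      (Complex.measurable_ofReal.comp hg'sm.measurable).comp measurable_subtype_coe
    exact h1.comp (AddCircle.measurableEquivIoc (T := (1:ℝ)) 0).measurable
  have hmp := AddCircle.measurePreserving_mk (1:ℝ) 0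
  have hvol : (volume : Measure (AddCircle (1:ℝ))) = AddCircle.haarAddCircle := by
    rw [AddCircle.volume_eq_smul_haarAddCircle]
    norm_num
  have hgcIoc : MemLp gc 2 (volume.restrict (Set.Ioc (0:ℝ) (0+1))) := by
    rw [zero_add, ← hres]
    exact hg'mem.ofReal
  have hG : MemLp G 2 (AddCircle.haarAddCircle (T := (1:ℝ))) := by
    rw [← hvol, ← hmp.map_eq]
    rw [memLp_map_measure_iff hGm.aestronglyMeasurable hmp.aemeasurable]
    refine hgcIoc.ae_eq ?_
    filter_upwards [ae_restrict_mem measurableSet_Ioc] with x hx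
    exact (AddCircle.liftIoc_coe_apply hx).symm
  -- integrability of the real pieces
  have hint : Integrable g' (volume.restrict (Set.Ioc (0:ℝ) 1)) := by
    haveI : IsFiniteMeasure (volume.restrict (Set.Ioc (0:ℝ) 1)) :=
      ⟨by simp [Real.volume_Ioc]⟩
    rw [← hres] at *
    exact hg'mem.integrable one_le_two
  have hintcos : ∀ k : ℕ, Integrable (fun x => g' x * Real.cos (2 * k * π * x))
      (volume.restrict (Set.Ioc (0:ℝ) 1)) := by
    intro k
    have hm : AEStronglyMeasurable (fun x : ℝ => Real.cos (2 * k * π * x))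
        (volume.restrict (Set.Ioc (0:ℝ) 1)) :=
      Continuous.aestronglyMeasurable (by fun_prop)
    have hb : ∀ᵐ x ∂(volume.restrict (Set.Ioc (0:ℝ) 1)),
        ‖Real.cos (2 * k * π * x)‖ ≤ 1 :=
      Filter.Eventually.of_forall fun x => by simpa using Real.abs_cos_le_one (2 * k * π * x)
    have := hint.bdd_mul hm hb
    simpa [mul_comm] using this
  have hintsin : ∀ k : ℕ, Integrable (fun x => g' x * Real.sin (2 * k * π * x))
      (volume.restrict (Set.Ioc (0:ℝ) 1)) := by
    intro k
    have hm : AEStronglyMeasurable (fun x : ℝ => Real.sin (2 * k * π * x))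
        (volume.restrict (Set.Ioc (0:ℝ) 1)) :=
      Continuous.aestronglyMeasurable (by fun_prop)
    have hb : ∀ᵐ x ∂(volume.restrict (Set.Ioc (0:ℝ) 1)),
        ‖Real.sin (2 * k * π * x)‖ ≤ 1 :=
      Filter.Eventually.of_forall fun x => by simpa using Real.abs_sin_le_one (2 * k * π * x)
    have := hint.bdd_mul hm hb
    simpa [mul_comm] using this
  have hintcos' : ∀ c : ℝ, Integrable (fun x => g' x * Real.cos (c * x))
      (volume.restrict (Set.Ioc (0:ℝ) 1)) := by
    intro c
    have hm : AEStronglyMeasurable (fun x : ℝ => Real.cos (c * x))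
        (volume.restrict (Set.Ioc (0:ℝ) 1)) :=
      Continuous.aestronglyMeasurable (by fun_prop)
    have hb : ∀ᵐ x ∂(volume.restrict (Set.Ioc (0:ℝ) 1)), ‖Real.cos (c * x)‖ ≤ 1 :=
      Filter.Eventually.of_forall fun x => by simpa using Real.abs_cos_le_one (c * x)
    have := hint.bdd_mul hm hb
    simpa [mul_comm] using this
  have hintsin' : ∀ c : ℝ, Integrable (fun x => g' x * Real.sin (c * x))
      (volume.restrict (Set.Ioc (0:ℝ) 1)) := by
    intro c
    have hm : AEStronglyMeasurable (fun x : ℝ => Real.sin (c * x))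
        (volume.restrict (Set.Ioc (0:ℝ) 1)) :=
      Continuous.aestronglyMeasurable (by fun_prop)
    have hb : ∀ᵐ x ∂(volume.restrict (Set.Ioc (0:ℝ) 1)), ‖Real.sin (c * x)‖ ≤ 1 :=
      Filter.Eventually.of_forall fun x => by simpa using Real.abs_sin_le_one (c * x)
    have := hint.bdd_mul hm hb
    simpa [mul_comm] using this
  have hcosZ : ∀ n : ℤ, ∫ x in Set.Ioc (0:ℝ) 1, g' x * Real.cos (2 * π * (n:ℝ) * x) = 0 := by
    intro n
    obtain h | h := Int.natAbs_eq n
    · have hcast : ((n:ℝ)) = (n.natAbs:ℝ) := by conv_lhs => rw [h]; rw [Int.cast_natCast]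
      have harg : ∀ x:ℝ, 2 * π * (n:ℝ) * x = 2 * (n.natAbs:ℝ) * π * x := fun x => by
        rw [hcast]; ring
      simp_rw [harg]
      exact hcos' n.natAbs
    · have hcast : ((n:ℝ)) = -(n.natAbs:ℝ) := by conv_lhs => rw [h]; rw [Int.cast_neg, Int.cast_natCast]
      have harg : ∀ x:ℝ, 2 * π * (n:ℝ) * x = -(2 * (n.natAbs:ℝ) * π * x) := fun x => by
        rw [hcast]; ring
      simp_rw [harg, Real.cos_neg]
      exact hcos' n.natAbs
  have hsinZ : ∀ n : ℤ, ∫ x in Set.Ioc (0:ℝ) 1, g' x * Real.sin (2 * π * (n:ℝ) * x) = 0 := by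
    intro n
    obtain h | h := Int.natAbs_eq n
    · have hcast : ((n:ℝ)) = (n.natAbs:ℝ) := by conv_lhs => rw [h]; rw [Int.cast_natCast]
      have harg : ∀ x:ℝ, 2 * π * (n:ℝ) * x = 2 * (n.natAbs:ℝ) * π * x := fun x => by
        rw [hcast]; ring
      simp_rw [harg]
      exact hsin' n.natAbs
    · have hcast : ((n:ℝ)) = -(n.natAbs:ℝ) := by conv_lhs => rw [h]; rw [Int.cast_neg, Int.cast_natCast]
      have harg : ∀ x:ℝ, 2 * π * (n:ℝ) * x = -(2 * (n.natAbs:ℝ) * π * x) := fun x => by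
        rw [hcast]; ring
      simp_rw [harg, Real.sin_neg, mul_neg]
      rw [integral_neg, hsin' n.natAbs, neg_zero]
  -- all Fourier coefficients vanish
  have hc : ∀ n : ℤ, fourierCoeff G n = 0 := by
    intro n
    have key : ∀ x : ℝ, fourier (-n) (x : AddCircle (1:ℝ)) • gc x
        = ((g' x * Real.cos (2 * π * (n:ℝ) * x) : ℝ) : ℂ)
          - Complex.I * ((g' x * Real.sin (2 * π * (n:ℝ) * x) : ℝ) : ℂ) := by
      intro x
      rw [smul_eq_mul, fourier_coe_apply]
      have harg : 2 * ↑π * Complex.I * ↑(-n : ℤ) * ↑x / ((1:ℝ):ℂ)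
          = ((-(2 * π * (n:ℝ) * x) : ℝ) : ℂ) * Complex.I := by
        push_cast; ring
      rw [harg, Complex.exp_mul_I, ← Complex.ofReal_cos, ← Complex.ofReal_sin,
        Real.cos_neg, Real.sin_neg]
      push_cast; ring
    rw [fourierCoeff_eq_intervalIntegral G n 0,
      intervalIntegral.integral_of_le (by norm_num : (0:ℝ) ≤ 0 + 1)]
    have hIoc : ∫ x in Set.Ioc (0:ℝ) (0+1),
        fourier (-n) (x : AddCircle (1:ℝ)) • G (x : AddCircle (1:ℝ))
        = ∫ x in Set.Ioc (0:ℝ) (0+1), fourier (-n) (x : AddCircle (1:ℝ)) • gc x := by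
      refine setIntegral_congr_fun measurableSet_Ioc fun x hx => ?_
      rw [hGdef, AddCircle.liftIoc_coe_apply hx]
    rw [hIoc]
    simp_rw [key]
    rw [zero_add]
    have hA : Integrable (fun x => ((g' x * Real.cos (2 * π * (n:ℝ) * x) : ℝ) : ℂ))
        (volume.restrict (Set.Ioc (0:ℝ) 1)) := (hintcos' (2 * π * (n:ℝ))).ofReal
    have hB : Integrable (fun x => Complex.I * ((g' x * Real.sin (2 * π * (n:ℝ) * x) : ℝ) : ℂ))
        (volume.restrict (Set.Ioc (0:ℝ) 1)) :=
      ((hintsin' (2 * π * (n:ℝ))).ofReal).const_mul _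
    have h1 : ∫ x in Set.Ioc (0:ℝ) 1, ((g' x * Real.cos (2 * π * (n:ℝ) * x) : ℝ) : ℂ)
        = ((∫ x in Set.Ioc (0:ℝ) 1, g' x * Real.cos (2 * π * (n:ℝ) * x) : ℝ) : ℂ) :=
      integral_ofReal
    have h2 : ∫ x in Set.Ioc (0:ℝ) 1, ((g' x * Real.sin (2 * π * (n:ℝ) * x) : ℝ) : ℂ)
        = ((∫ x in Set.Ioc (0:ℝ) 1, g' x * Real.sin (2 * π * (n:ℝ) * x) : ℝ) : ℂ) :=
      integral_ofReal
    rw [integral_sub hA hB, integral_const_mul, h1, h2, hcosZ n, hsinZ n]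
    simp
  -- conclude G = 0 a.e.
  have h0 : hG.toLp G = 0 := by
    apply (fourierBasis (T := (1:ℝ))).repr.injective
    rw [map_zero]
    apply lp.ext
    funext n
    rw [fourierBasis_repr]
    have hcongr : fourierCoeff ((hG.toLp G : Lp ℂ 2 (AddCircle.haarAddCircle (T := (1:ℝ))))
        : AddCircle (1:ℝ) → ℂ) n = fourierCoeff G n := by
      unfold fourierCoeff
      refine integral_congr_ae ?_
      filter_upwards [hG.coeFn_toLp] with x hx
      rw [hx]
    rw [hcongr, hc n]
    rfl
  have haeG : G =ᵐ[AddCircle.haarAddCircle (T := (1:ℝ))] 0 := by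
    have h1 := hG.coeFn_toLp
    rw [h0] at h1
    exact h1.symm.trans (Lp.coeFn_zero _ _ _)
  -- pull back to the interval
  have hmap : G =ᵐ[(volume.restrict (Set.Ioc (0:ℝ) (0+1))).map
      ((↑) : ℝ → AddCircle (1:ℝ))] (0 : AddCircle (1:ℝ) → ℂ) := by
    rw [hmp.map_eq, hvol]; exact haeG
  have hcomp := ae_eq_comp hmp.aemeasurable hmap
  have hgc0 : ∀ᵐ x ∂(volume.restrict (Set.Ioc (0:ℝ) (0+1))), gc x = 0 := by
    filter_upwards [hcomp, ae_restrict_mem measurableSet_Ioc] with x hx hmem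
    have hl : AddCircle.liftIoc (1:ℝ) 0 gc ↑x = gc x := AddCircle.liftIoc_coe_apply hmem
    rw [← hl]
    exact hx
  rw [zero_add] at hgc0
  rw [hres] at heq ⊢
  filter_upwards [hgc0, heq] with x hx1 hx2
  rw [hx2]
  have hx1' : ((g' x : ℝ) : ℂ) = 0 := hx1
  exact_mod_cast hx1'

end CompleteSystemAux

open CompleteSystemAux Set in
/-- Completeness of the system `{(1-x), (1-x)cos(2kπx), sin(2kπx) : k ≥ 1}` in `L²(0,1)`:
if `f ∈ L²(0,1)` is orthogonal to every member of the system, then `f = 0` a.e. on `(0,1)`. -/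
theorem complete_system_L2 (f : ℝ → ℝ)
    (hf : MemLp f 2 (volume.restrict (Set.Ioo (0:ℝ) 1)))
    (h1 : ∫ x in Set.Ioo (0:ℝ) 1, f x * (1 - x) = 0)
    (h2 : ∀ k : ℕ, 1 ≤ k → ∫ x in Set.Ioo (0:ℝ) 1, f x * (1 - x) * Real.cos (2 * k * π * x) = 0)
    (h3 : ∀ k : ℕ, 1 ≤ k → ∫ x in Set.Ioo (0:ℝ) 1, f x * Real.sin (2 * k * π * x) = 0) :
    ∀ᵐ x ∂(volume.restrict (Set.Ioo (0:ℝ) 1)), f x = 0 := by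
  set μ := volume.restrict (Set.Ioo (0:ℝ) 1) with hμ
  haveI : IsFiniteMeasure μ := ⟨by
    rw [hμ, Measure.restrict_apply_univ]
    simp [Real.volume_Ioo]⟩
  -- basic integrability
  have hfi : Integrable f μ := hf.integrable one_le_two
  have hfrefl : MemLp (fun x => f (1 - x)) 2 μ := hf.comp_measurePreserving refl_mp
  have hfirefl : Integrable (fun x => f (1 - x)) μ := hfrefl.integrable one_le_two
  -- sine integrals (including k = 0)
  have hsin_f : ∀ k : ℕ, ∫ x in Set.Ioo (0:ℝ) 1, f x * Real.sin (2 * k * π * x) = 0 := by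
    intro k
    rcases Nat.eq_zero_or_pos k with hk | hk
    · subst hk
      simp
    · exact h3 k hk
  -- cosine-type integrals against (1-x), including k = 0
  have hS : ∀ k : ℕ, ∫ x in Set.Ioo (0:ℝ) 1, f x * (1 - x) * Real.cos (2 * k * π * x) = 0 := by
    intro k
    rcases Nat.eq_zero_or_pos k with hk | hk
    · subst hk
      simpa using h1
    · exact h2 k hk
  -- integrability of f times bounded a.e. functions
  have hbdd : ∀ (F c : ℝ → ℝ), Integrable F μ → AEStronglyMeasurable c μ →
      (∀ᵐ x ∂μ, ‖c x‖ ≤ 1) → Integrable (fun x => F x * c x) μ := by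
    intro F c hF hc hb
    have := hF.bdd_mul hc hb
    simpa [mul_comm] using this
  have hmcos : ∀ k : ℕ, AEStronglyMeasurable (fun x : ℝ => Real.cos (2 * k * π * x)) μ :=
    fun k => Continuous.aestronglyMeasurable (by fun_prop)
  have hmsin : ∀ k : ℕ, AEStronglyMeasurable (fun x : ℝ => Real.sin (2 * k * π * x)) μ :=
    fun k => Continuous.aestronglyMeasurable (by fun_prop)
  have hbcos : ∀ k : ℕ, ∀ᵐ x ∂μ, ‖Real.cos (2 * k * π * x)‖ ≤ 1 := fun k =>
    Filter.Eventually.of_forall fun x => by simpa using Real.abs_cos_le_one (2 * k * π * x)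
  have hbsin : ∀ k : ℕ, ∀ᵐ x ∂μ, ‖Real.sin (2 * k * π * x)‖ ≤ 1 := fun k =>
    Filter.Eventually.of_forall fun x => by simpa using Real.abs_sin_le_one (2 * k * π * x)
  -- Step A : f is a.e. symmetric about 1/2
  have hgmem : MemLp (fun x => f x - f (1 - x)) 2 μ := hf.sub hfrefl
  have hArefl : ∀ k : ℕ, ∫ x in Set.Ioo (0:ℝ) 1, f (1 - x) * Real.cos (2 * k * π * x)
      = ∫ x in Set.Ioo (0:ℝ) 1, f x * Real.cos (2 * k * π * x) := by
    intro k
    have A := integral_reflect (fun y => f y * Real.cos (2 * k * π * y))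
    simp_rw [cos_reflect] at A
    exact A
  have hArefls : ∀ k : ℕ, ∫ x in Set.Ioo (0:ℝ) 1, f (1 - x) * Real.sin (2 * k * π * x) = 0 := by
    intro k
    have A := integral_reflect (fun y => f y * Real.sin (2 * k * π * y))
    simp_rw [sin_reflect, mul_neg] at A
    rw [integral_neg] at A
    rw [hsin_f k] at A
    linarith [A]
  have hcos_g : ∀ k : ℕ, ∫ x in Set.Ioo (0:ℝ) 1,
      (f x - f (1 - x)) * Real.cos (2 * k * π * x) = 0 := by
    intro k
    have hI1 : Integrable (fun x => f x * Real.cos (2 * k * π * x)) μ :=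
      hbdd f _ hfi (hmcos k) (hbcos k)
    have hI2 : Integrable (fun x => f (1 - x) * Real.cos (2 * k * π * x)) μ :=
      hbdd _ _ hfirefl (hmcos k) (hbcos k)
    have : ∫ x in Set.Ioo (0:ℝ) 1, (f x - f (1 - x)) * Real.cos (2 * k * π * x)
        = (∫ x in Set.Ioo (0:ℝ) 1, f x * Real.cos (2 * k * π * x))
          - ∫ x in Set.Ioo (0:ℝ) 1, f (1 - x) * Real.cos (2 * k * π * x) := by
      rw [← integral_sub hI1 hI2]
      refine integral_congr_ae (Filter.Eventually.of_forall fun x => by dsimp only; ring)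
    rw [this, hArefl k, sub_self]
  have hsin_g : ∀ k : ℕ, ∫ x in Set.Ioo (0:ℝ) 1,
      (f x - f (1 - x)) * Real.sin (2 * k * π * x) = 0 := by
    intro k
    have hI1 : Integrable (fun x => f x * Real.sin (2 * k * π * x)) μ :=
      hbdd f _ hfi (hmsin k) (hbsin k)
    have hI2 : Integrable (fun x => f (1 - x) * Real.sin (2 * k * π * x)) μ :=
      hbdd _ _ hfirefl (hmsin k) (hbsin k)
    have : ∫ x in Set.Ioo (0:ℝ) 1, (f x - f (1 - x)) * Real.sin (2 * k * π * x)
        = (∫ x in Set.Ioo (0:ℝ) 1, f x * Real.sin (2 * k * π * x))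
          - ∫ x in Set.Ioo (0:ℝ) 1, f (1 - x) * Real.sin (2 * k * π * x) := by
      rw [← integral_sub hI1 hI2]
      refine integral_congr_ae (Filter.Eventually.of_forall fun x => by dsimp only; ring)
    rw [this, hArefls k, hsin_f k, sub_zero]
  have hrefl : ∀ᵐ x ∂μ, f x - f (1 - x) = 0 :=
    complete_fourier _ hgmem hcos_g hsin_g
  -- Step B : all Fourier coefficients of f vanish
  have hcos_f : ∀ k : ℕ, ∫ x in Set.Ioo (0:ℝ) 1, f x * Real.cos (2 * k * π * x) = 0 := by
    intro k
    -- the x-weighted piece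
    have B := integral_reflect (fun y => f y * y * Real.cos (2 * k * π * y))
    simp_rw [cos_reflect] at B
    -- B : ∫ f(1-x) * (1-x) * cos = ∫ f x * x * cos
    have hcongr : ∫ x in Set.Ioo (0:ℝ) 1, f (1 - x) * (1 - x) * Real.cos (2 * k * π * x)
        = ∫ x in Set.Ioo (0:ℝ) 1, f x * (1 - x) * Real.cos (2 * k * π * x) := by
      refine integral_congr_ae (hrefl.mono fun x hx => ?_)
      dsimp only
      rw [sub_eq_zero] at hx
      rw [← hx]
    have T2 : ∫ x in Set.Ioo (0:ℝ) 1, f x * x * Real.cos (2 * k * π * x) = 0 := by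
      rw [← B, hcongr, hS k]
    -- integrability of the two pieces
    have hb1 : ∀ᵐ x ∂μ, ‖(1 - x) * Real.cos (2 * k * π * x)‖ ≤ 1 := by
      filter_upwards [ae_restrict_mem measurableSet_Ioo] with x hx
      rw [Real.norm_eq_abs, abs_mul]
      have h1 : |1 - x| ≤ 1 := by
        rw [abs_le]; constructor <;> [linarith [hx.2]; linarith [hx.1]]
      calc |1 - x| * |Real.cos (2 * k * π * x)| ≤ 1 * 1 :=
            mul_le_mul h1 (Real.abs_cos_le_one _) (abs_nonneg _) zero_le_one
        _ = 1 := mul_one 1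
    have hb2 : ∀ᵐ x ∂μ, ‖x * Real.cos (2 * k * π * x)‖ ≤ 1 := by
      filter_upwards [ae_restrict_mem measurableSet_Ioo] with x hx
      rw [Real.norm_eq_abs, abs_mul]
      have h1 : |x| ≤ 1 := by
        rw [abs_le]; constructor <;> [linarith [hx.1]; linarith [hx.2]]
      calc |x| * |Real.cos (2 * k * π * x)| ≤ 1 * 1 :=
            mul_le_mul h1 (Real.abs_cos_le_one _) (abs_nonneg _) zero_le_one
        _ = 1 := mul_one 1
    have hI1 : Integrable (fun x => f x * (1 - x) * Real.cos (2 * k * π * x)) μ := by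
      have := hbdd f (fun x => (1 - x) * Real.cos (2 * k * π * x)) hfi
        (Continuous.aestronglyMeasurable (by fun_prop)) hb1
      simpa [mul_assoc] using this
    have hI2 : Integrable (fun x => f x * x * Real.cos (2 * k * π * x)) μ := by
      have := hbdd f (fun x => x * Real.cos (2 * k * π * x)) hfi
        (Continuous.aestronglyMeasurable (by fun_prop)) hb2
      simpa [mul_assoc] using this
    have hsplit : ∫ x in Set.Ioo (0:ℝ) 1, f x * Real.cos (2 * k * π * x)
        = (∫ x in Set.Ioo (0:ℝ) 1, f x * (1 - x) * Real.cos (2 * k * π * x))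
          + ∫ x in Set.Ioo (0:ℝ) 1, f x * x * Real.cos (2 * k * π * x) := by
      rw [← integral_add hI1 hI2]
      refine integral_congr_ae (Filter.Eventually.of_forall fun x => by dsimp only; ring)
    rw [hsplit, hS k, T2, add_zero]
  exact complete_fourier f hf hcos_f hsin_f
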